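/- Let p ∈ {2,...,n} and μ ∈ Γ_p with μ_1 ≤ μ_2 ≤ ... ≤ μ_n. Then the partial derivatives of σ_p satisfy the monotonicity σ_{p-1}(μ|1) ≥ σ_{p-1}(μ|2) ≥ ... ≥ σ_{p-1}(μ|n) > 0, and moreover μ_n σ_{p-1}(μ|n) ≥ (p/n) σ_p(μ). -/

import Mathlib

/-- The `p`-th elementary symmetric polynomial of `μ : Fin n → ℝ`. -/
noncomputable def esymm (n p : ℕ) (μ : Fin n → ℝ) : ℝ :=
  ∑ t ∈ Finset.powersetCard p Finset.univ, ∏ i ∈ t, μ i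

/-- The `p`-th Gårding cone in `ℝⁿ`. -/
def gardingCone (n p : ℕ) : Set (Fin n → ℝ) :=
  {μ | ∀ q, 1 ≤ q → q ≤ p → 0 < esymm n q μ}

open Finset


namespace StmtAux

variable {n : ℕ}

/-- elementary symmetric function of `μ` restricted to index set `A`. -/
noncomputable def S (A : Finset (Fin n)) (q : ℕ) (μ : Fin n → ℝ) : ℝ :=
  ∑ t ∈ Finset.powersetCard q A, ∏ i ∈ t, μ i

lemma S_zero (A : Finset (Fin n)) (μ : Fin n → ℝ) : S A 0 μ = 1 := by
  simp [S]

lemma S_of_card_lt {A : Finset (Fin n)} {q : ℕ} (h : A.card < q) (μ : Fin n → ℝ) :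
    S A q μ = 0 := by
  simp [S, Finset.powersetCard_eq_empty.2 h]

lemma card_le_of_S_ne {A : Finset (Fin n)} {q : ℕ} {μ : Fin n → ℝ} (h : S A q μ ≠ 0) :
    q ≤ A.card := by
  by_contra hc
  exact h (S_of_card_lt (by omega) μ)

lemma S_one (A : Finset (Fin n)) (μ : Fin n → ℝ) : S A 1 μ = ∑ i ∈ A, μ i := by
  rw [S, Finset.powersetCard_one, Finset.sum_map]
  simp

lemma S_erase_add {A : Finset (Fin n)} {i : Fin n} (hi : i ∈ A) (q : ℕ) (μ : Fin n → ℝ) :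
    S A (q + 1) μ = S (A.erase i) (q + 1) μ + μ i * S (A.erase i) q μ := by
  have hni : i ∉ A.erase i := Finset.notMem_erase i A
  conv_lhs => rw [S, ← Finset.insert_erase hi, Finset.powersetCard_succ_insert hni]
  rw [Finset.sum_union ?hdisj]
  case hdisj =>
    rw [Finset.disjoint_left]
    rintro t ht ht'
    obtain ⟨u, hu, rfl⟩ := Finset.mem_image.1 ht'
    exact hni ((Finset.mem_powersetCard.1 ht).1 (Finset.mem_insert_self i u))
  congr 1
  rw [Finset.sum_image ?hinj]
  case hinj =>
    intro t ht u hu he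
    have hit : i ∉ t := fun hm => hni ((Finset.mem_powersetCard.1 ht).1 hm)
    have hiu : i ∉ u := fun hm => hni ((Finset.mem_powersetCard.1 hu).1 hm)
    have := congrArg (fun s => Finset.erase s i) he
    simpa [Finset.erase_insert hit, Finset.erase_insert hiu] using this
  rw [S, Finset.mul_sum]
  refine Finset.sum_congr rfl fun t ht => ?_
  have hit : i ∉ t := fun hm => hni ((Finset.mem_powersetCard.1 ht).1 hm)
  rw [Finset.prod_insert hit]

lemma powersetCard_erase {A : Finset (Fin n)} {i : Fin n} (q : ℕ) :
    Finset.powersetCard q (A.erase i) =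
      (Finset.powersetCard q A).filter (fun t => i ∉ t) := by
  ext t
  simp only [Finset.mem_powersetCard, Finset.mem_filter, Finset.subset_erase]
  tauto

lemma sum_S_erase (A : Finset (Fin n)) (q : ℕ) (μ : Fin n → ℝ) :
    ∑ i ∈ A, S (A.erase i) q μ = ((A.card : ℝ) - q) * S A q μ := by
  have key : ∀ i ∈ A, S (A.erase i) q μ =
      ∑ t ∈ Finset.powersetCard q A, (if i ∈ t then 0 else ∏ j ∈ t, μ j) := by
    intro i _
    rw [S, powersetCard_erase, Finset.sum_filter]
    exact Finset.sum_congr rfl fun t _ => by by_cases h : i ∈ t <;> simp [h]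
  rw [Finset.sum_congr rfl key, Finset.sum_comm, S, Finset.mul_sum]
  refine Finset.sum_congr rfl fun t ht => ?_
  obtain ⟨hsub, hcard⟩ := Finset.mem_powersetCard.1 ht
  rw [Finset.sum_ite, Finset.sum_const_zero, Finset.sum_const, zero_add]
  have h1 : A.filter (fun i => i ∉ t) = A \ t := by
    ext x; simp [Finset.mem_sdiff]
  rw [h1, Finset.card_sdiff_of_subset hsub, hcard, nsmul_eq_mul,
    Nat.cast_sub (hcard ▸ Finset.card_le_card hsub)]

lemma sum_weighted_S_erase (A : Finset (Fin n)) (q : ℕ) (μ : Fin n → ℝ) :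
    ∑ i ∈ A, μ i * S (A.erase i) q μ = ((q : ℝ) + 1) * S A (q + 1) μ := by
  have key : ∀ i ∈ A, μ i * S (A.erase i) q μ
      = S A (q + 1) μ - S (A.erase i) (q + 1) μ := by
    intro i hi
    rw [S_erase_add hi q μ]; ring
  rw [Finset.sum_congr rfl key, Finset.sum_sub_distrib, Finset.sum_const, sum_S_erase,
    nsmul_eq_mul]
  push_cast
  ring

lemma erase_erase_comm (A : Finset (Fin n)) (i j : Fin n) :
    (A.erase i).erase j = (A.erase j).erase i := by
  ext x; simp only [Finset.mem_erase]; tauto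

lemma S_erase_sub_erase {A : Finset (Fin n)} {i j : Fin n} (hi : i ∈ A) (hj : j ∈ A)
    (hij : i ≠ j) (q : ℕ) (μ : Fin n → ℝ) :
    S (A.erase i) (q + 1) μ - S (A.erase j) (q + 1) μ
      = (μ j - μ i) * S ((A.erase i).erase j) q μ := by
  have hji : j ∈ A.erase i := Finset.mem_erase.2 ⟨hij.symm, hj⟩
  have hij' : i ∈ A.erase j := Finset.mem_erase.2 ⟨hij, hi⟩
  rw [S_erase_add hji q μ, S_erase_add hij' q μ, erase_erase_comm A j i]
  ring


lemma count_supersets {A u : Finset (Fin n)} (hu : u ⊆ A) {j : ℕ} (hj : u.card ≤ j) :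
    ((Finset.powersetCard j A).filter (fun t => u ⊆ t)).card
      = (A.card - u.card).choose (j - u.card) := by
  · have : ((Finset.powersetCard j A).filter (fun t => u ⊆ t)).card
        = (Finset.powersetCard (j - u.card) (A \ u)).card := by
      apply Finset.card_bij' (fun t _ => t \ u) (fun v _ => v ∪ u)
      · intro t ht
        simp only [Finset.mem_filter, Finset.mem_powersetCard] at ht
        obtain ⟨⟨hta, htc⟩, hut⟩ := ht
        refine Finset.mem_powersetCard.2 ⟨Finset.sdiff_subset_sdiff hta (le_refl u), ?_⟩
        rw [Finset.card_sdiff_of_subset hut, htc]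
      · intro v hv
        simp only [Finset.mem_powersetCard] at hv
        obtain ⟨hva, hvc⟩ := hv
        have hvu : Disjoint v u := Finset.disjoint_of_subset_left hva (Finset.sdiff_disjoint)
        refine Finset.mem_filter.2 ⟨Finset.mem_powersetCard.2 ⟨?_, ?_⟩, Finset.subset_union_right⟩
        · exact Finset.union_subset (hva.trans (Finset.sdiff_subset)) hu
        · rw [Finset.card_union_of_disjoint hvu, hvc]
          omega
      · intro t ht
        simp only [Finset.mem_filter] at ht
        exact Finset.sdiff_union_of_subset ht.2
      · intro v hv
        simp only [Finset.mem_powersetCard] at hv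
        have hvu : Disjoint v u := Finset.disjoint_of_subset_left hv.1 (Finset.sdiff_disjoint)
        rw [Finset.union_sdiff_right, Finset.sdiff_eq_self_of_disjoint hvu]
    rw [this, Finset.card_powersetCard, Finset.card_sdiff_of_subset hu]

lemma count_supersets_empty {A u : Finset (Fin n)} {j : ℕ} (hj : j < u.card) :
    (Finset.powersetCard j A).filter (fun t => u ⊆ t) = ∅ := by
  refine Finset.filter_eq_empty_iff.2 fun t ht hut => ?_
  have := Finset.card_le_card hut
  rw [(Finset.mem_powersetCard.1 ht).2] at this
  omega


lemma S_shift (A : Finset (Fin n)) (j : ℕ) (μ : Fin n → ℝ) (c : ℝ) :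
    S A j (fun x => μ x + c)
      = ∑ q ∈ Finset.range (j + 1),
          (((A.card - q).choose (j - q) : ℝ) * c ^ (j - q)) * S A q μ := by
  classical
  -- Step 1: expand each product
  have step1 : S A j (fun x => μ x + c)
      = ∑ T ∈ Finset.powersetCard j A, ∑ u ∈ A.powerset,
          (if u ⊆ T then (∏ x ∈ u, μ x) * c ^ (j - u.card) else 0) := by
    rw [S]
    refine Finset.sum_congr rfl fun T hT => ?_
    obtain ⟨hTA, hTc⟩ := Finset.mem_powersetCard.1 hT
    rw [Finset.prod_add]
    have hps : T.powerset = A.powerset.filter (fun u => u ⊆ T) := by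
      ext u
      simp only [Finset.mem_powerset, Finset.mem_filter]
      exact ⟨fun h => ⟨h.trans hTA, h⟩, fun h => h.2⟩
    rw [hps, Finset.sum_filter]
    refine Finset.sum_congr rfl fun u hu => ?_
    by_cases h : u ⊆ T
    · simp only [h, if_true]
      rw [Finset.prod_const, Finset.card_sdiff_of_subset h, hTc]
    · simp [h]
  -- Step 2: swap and count
  have step2 : S A j (fun x => μ x + c)
      = ∑ u ∈ A.powerset,
          (((Finset.powersetCard j A).filter (fun T => u ⊆ T)).card : ℝ)
            * ((∏ x ∈ u, μ x) * c ^ (j - u.card)) := by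
    rw [step1, Finset.sum_comm]
    refine Finset.sum_congr rfl fun u hu => ?_
    rw [Finset.sum_ite, Finset.sum_const_zero, Finset.sum_const, add_zero, nsmul_eq_mul]
  -- Step 3: group by cardinality
  have step3 : S A j (fun x => μ x + c)
      = ∑ q ∈ Finset.range (A.card + 1),
          (if q ≤ j then (((A.card - q).choose (j - q) : ℝ) * c ^ (j - q)) * S A q μ else 0) := by
    rw [step2]
    rw [← Finset.sum_fiberwise_of_maps_to (g := fun u : Finset (Fin n) => u.card)
      (fun u hu => Finset.mem_range.2 (Nat.lt_succ_of_le
        (Finset.card_le_card (Finset.mem_powerset.1 hu))))]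
    refine Finset.sum_congr rfl fun q hq => ?_
    have hfib : A.powerset.filter (fun u => u.card = q) = Finset.powersetCard q A := by
      rw [Finset.powersetCard_eq_filter]
    rw [hfib]
    by_cases hqj : q ≤ j
    · simp only [hqj, if_true]
      rw [S, Finset.mul_sum]
      refine Finset.sum_congr rfl fun u hu => ?_
      obtain ⟨huA, huc⟩ := Finset.mem_powersetCard.1 hu
      rw [count_supersets huA (by omega), huc]
      ring
    · simp only [hqj, if_false]
      refine Finset.sum_eq_zero fun u hu => ?_
      obtain ⟨huA, huc⟩ := Finset.mem_powersetCard.1 hu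
      rw [count_supersets_empty (by omega)]
      simp
  -- Step 4: adjust the range
  rw [step3]
  have hM : ∀ m, A.card + 1 ≤ m →
      ∑ q ∈ Finset.range (A.card + 1),
          (if q ≤ j then (((A.card - q).choose (j - q) : ℝ) * c ^ (j - q)) * S A q μ else 0)
        = ∑ q ∈ Finset.range m,
          (if q ≤ j then (((A.card - q).choose (j - q) : ℝ) * c ^ (j - q)) * S A q μ else 0) := by
    intro m hm
    refine Finset.sum_subset (Finset.range_subset_range.2 hm) fun q hq hq' => ?_
    have : A.card < q := by
      simp only [Finset.mem_range] at hq hq'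
      omega
    rw [S_of_card_lt this]
    simp
  have hM2 : ∀ m, j + 1 ≤ m →
      ∑ q ∈ Finset.range (j + 1),
          (((A.card - q).choose (j - q) : ℝ) * c ^ (j - q)) * S A q μ
        = ∑ q ∈ Finset.range m,
          (if q ≤ j then (((A.card - q).choose (j - q) : ℝ) * c ^ (j - q)) * S A q μ else 0) := by
    intro m hm
    rw [← Finset.sum_subset (f := fun q => if q ≤ j then (((A.card - q).choose (j - q) : ℝ) * c ^ (j - q)) * S A q μ else 0) (Finset.range_subset_range.2 hm)
      (fun q _ hq' => by
        have : j < q := by simp at hq'; omega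
        simp [Nat.not_le.2 this])]
    refine Finset.sum_congr rfl fun q hq => ?_
    have : q ≤ j := by
      simp only [Finset.mem_range] at hq; omega
    simp [this]
  rw [hM (max (A.card + 1) (j + 1)) (le_max_left _ _),
    hM2 (max (A.card + 1) (j + 1)) (le_max_right _ _)]


def GC (A : Finset (Fin n)) (k : ℕ) (μ : Fin n → ℝ) : Prop :=
  ∀ q, 1 ≤ q → q ≤ k → 0 < S A q μ

lemma GC_anti {A : Finset (Fin n)} {k k' : ℕ} {μ : Fin n → ℝ} (h : k' ≤ k)
    (hG : GC A k μ) : GC A k' μ :=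
  fun q h1 h2 => hG q h1 (h2.trans h)

lemma GC_shift {A : Finset (Fin n)} {k : ℕ} {μ : Fin n → ℝ} {c : ℝ} (hc : 0 ≤ c)
    (hG : GC A k μ) : GC A k (fun x => μ x + c) := by
  intro q h1 h2
  rw [S_shift]
  have hterm : ∀ r ∈ Finset.range (q + 1),
      0 ≤ (((A.card - r).choose (q - r) : ℝ) * c ^ (q - r)) * S A r μ := by
    intro r hr
    have hr' : r ≤ q := by simp only [Finset.mem_range] at hr; omega
    have hS : 0 ≤ S A r μ := by
      rcases Nat.eq_zero_or_pos r with h0 | h0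
      · rw [h0, S_zero]; norm_num
      · exact le_of_lt (hG r h0 (hr'.trans h2))
    positivity
  have hq : 0 < (((A.card - q).choose (q - q) : ℝ) * c ^ (q - q)) * S A q μ := by
    simp only [Nat.sub_self, Nat.choose_zero_right, Nat.cast_one, pow_zero, one_mul]
    exact hG q h1 h2
  exact Finset.sum_pos' hterm ⟨q, Finset.self_mem_range_succ q, hq⟩

lemma GC_card {A : Finset (Fin n)} {k : ℕ} {μ : Fin n → ℝ} (h1 : 1 ≤ k)
    (hG : GC A k μ) : k ≤ A.card :=
  card_le_of_S_ne (ne_of_gt (hG k h1 le_rfl))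

/-- bridge to `Multiset.esymm` -/
lemma S_eq_esymm (A : Finset (Fin n)) (q : ℕ) (μ : Fin n → ℝ) :
    S A q μ = (A.val.map μ).esymm q := by
  rw [Finset.esymm_map_val, S]

end StmtAux
section MultisetLemmas

lemma esymm_zero'' (s : Multiset ℝ) : s.esymm 0 = 1 := by
  simp [Multiset.esymm, Multiset.powersetCard_zero_left]

lemma esymm_cons (a : ℝ) (s : Multiset ℝ) (k : ℕ) :
    (a ::ₘ s).esymm (k + 1) = s.esymm (k + 1) + a * s.esymm k := by
  rw [Multiset.esymm, Multiset.powersetCard_cons, Multiset.map_add, Multiset.sum_add]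
  congr 1
  rw [Multiset.map_map, Multiset.esymm]
  have : (Multiset.prod ∘ Multiset.cons a) = fun t : Multiset ℝ => a * t.prod := by
    funext t; simp [Multiset.prod_cons]
  rw [this, ← Multiset.sum_map_mul_left]

lemma esymm_of_card_lt {s : Multiset ℝ} {k : ℕ} (h : Multiset.card s < k) :
    s.esymm k = 0 := by
  have hk : k = Multiset.card s + (k - Multiset.card s) := by omega
  rw [Multiset.esymm, hk, Multiset.powersetCard_card_add s (by omega)]
  simp

lemma esymm_card (s : Multiset ℝ) : s.esymm (Multiset.card s) = s.prod := by
  induction s using Multiset.induction with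
  | empty => simp [Multiset.esymm, Multiset.powersetCard_zero_left]
  | cons a s ih =>
      rw [Multiset.card_cons, esymm_cons, esymm_of_card_lt (by omega), ih,
        Multiset.prod_cons, zero_add]

lemma esymm_one' (s : Multiset ℝ) : s.esymm 1 = s.sum := by
  induction s using Multiset.induction with
  | empty => rw [esymm_of_card_lt (by simp)]; simp
  | cons a s ih =>
      rw [esymm_cons, ih, Multiset.sum_cons, esymm_zero'']
      ring

lemma esymm_two (s : Multiset ℝ) :
    2 * s.esymm 2 = s.sum ^ 2 - (s.map (fun x => x ^ 2)).sum := by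
  induction s using Multiset.induction with
  | empty => simp; exact esymm_of_card_lt (by simp)
  | cons a s ih =>
      have h2 : (2 : ℕ) = 1 + 1 := rfl
      rw [h2, esymm_cons, Multiset.sum_cons, Multiset.map_cons, Multiset.sum_cons, esymm_one']
      rw [h2] at ih
      have expand : (a + s.sum) ^ (1+1) = a^(1+1) + 2*a*s.sum + s.sum^(1+1) := by ring
      linarith [ih]

lemma esymm_compl (s : Multiset ℝ) (hs : ∀ x ∈ s, x ≠ 0) :
    ∀ j, j ≤ Multiset.card s →
      s.esymm (Multiset.card s - j) = s.prod * ((s.map Inv.inv).esymm j) := by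
  induction s using Multiset.induction with
  | empty =>
      intro j hj
      simp only [Multiset.card_zero, Nat.le_zero] at hj
      subst hj
      simp [esymm_zero'']
  | cons a s ih =>
      intro j hj
      have ha : a ≠ 0 := hs a (Multiset.mem_cons_self a s)
      have hs' : ∀ x ∈ s, x ≠ 0 := fun x hx => hs x (Multiset.mem_cons_of_mem hx)
      rw [Multiset.card_cons] at hj ⊢
      rcases Nat.eq_zero_or_pos j with rfl | hj0
      · rw [Nat.sub_zero, esymm_zero'', mul_one, ← Multiset.card_cons]
        exact esymm_card _
      obtain ⟨j', rfl⟩ : ∃ j', j = j' + 1 := ⟨j - 1, by omega⟩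
      rw [Multiset.map_cons, esymm_cons, Multiset.prod_cons]
      rcases Nat.lt_or_ge j' (Multiset.card s) with hlt | hge
      · have hcc : Multiset.card s + 1 - (j' + 1) = (Multiset.card s - j' - 1) + 1 := by omega
        rw [hcc, esymm_cons]
        have e1 : s.esymm (Multiset.card s - j' - 1)
            = s.prod * ((s.map Inv.inv).esymm (j' + 1)) := by
          have h3 : Multiset.card s - j' - 1 = Multiset.card s - (j' + 1) := by omega
          rw [h3]; exact ih hs' (j' + 1) (by omega)
        have e2 : s.esymm ((Multiset.card s - j' - 1) + 1)
            = s.prod * ((s.map Inv.inv).esymm j') := by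
          have h3 : (Multiset.card s - j' - 1) + 1 = Multiset.card s - j' := by omega
          rw [h3]; exact ih hs' j' (by omega)
        rw [e1, e2]
        field_simp
        ring
      · have hj'eq : j' = Multiset.card s := by omega
        subst hj'eq
        rw [Nat.sub_self, esymm_zero'']
        have hy : Multiset.card (s.map Inv.inv) = Multiset.card s := Multiset.card_map _ _
        rw [esymm_of_card_lt (by omega), ← hy, esymm_card, Multiset.prod_map_inv']
        have hprod : s.prod ≠ 0 := Multiset.prod_ne_zero (fun h0 => hs' 0 h0 rfl)
        field_simp
        simp

end MultisetLemmas
section PolySection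
open Polynomial

lemma splits_derivative (p : ℝ[X]) (hp : p.Splits) :
    (derivative p).Splits := by
  by_cases hd : derivative p = 0
  · rw [hd]; exact Splits.zero
  · have h0 : p.natDegree ≠ 0 := by
      intro h
      exact hd (by rw [eq_C_of_natDegree_eq_zero h]; simp)
    rw [splits_iff_card_roots]
    have h1 := card_roots_le_derivative p
    have h2 := card_roots' (derivative p)
    have h3 := natDegree_derivative_le p
    rw [splits_iff_card_roots] at hp
    omega

lemma splits_iterate_derivative (d : ℕ) (p : ℝ[X]) (hp : p.Splits) :
    (derivative^[d] p).Splits := by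
  induction d with
  | zero => exact hp
  | succ d ih => rw [Function.iterate_succ_apply']; exact splits_derivative _ ih

lemma splits_multiset_prod' (t : Multiset ℝ[X]) (ht : ∀ f ∈ t, f.Splits) :
    t.prod.Splits := by
  induction t using Multiset.induction with
  | empty => simpa using Splits.one
  | cons a s ih =>
      rw [Multiset.prod_cons]
      exact Splits.mul (ht a (Multiset.mem_cons_self a s))
        (ih fun f hf => ht f (Multiset.mem_cons_of_mem hf))

/-- key quadratic fact : if a real polynomial splits and its linear coefficient vanishes,
then the product of constant and quadratic coefficients is nonpositive. -/
lemma coeff_quad_nonpos {R : ℝ[X]} (hs : R.Splits) (h1 : R.coeff 1 = 0) :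
    R.coeff 0 * R.coeff 2 ≤ 0 := by
  by_cases hc0 : R.coeff 0 = 0
  · rw [hc0, zero_mul]
  have hR : R ≠ 0 := fun h => hc0 (by rw [h]; simp)
  set m := R.natDegree with hm
  rcases Nat.lt_or_ge m 2 with hm2 | hm2
  · rw [coeff_eq_zero_of_natDegree_lt hm2, mul_zero]
  have hroots : Multiset.card R.roots = m := splits_iff_card_roots.1 hs
  have hprodeq := Splits.eq_prod_roots hs
  set z : Multiset ℝ := R.roots.map (fun r => -r) with hz
  have hzcard : Multiset.card z = m := by rw [hz, Multiset.card_map, hroots]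
  have hre : R = Polynomial.C R.leadingCoeff * (z.map (fun a => X + C a)).prod := by
    conv_lhs => rw [hprodeq]
    congr 1
    rw [hz, Multiset.map_map]
    congr 1
    apply Multiset.map_congr rfl
    intro r _
    simp [sub_eq_add_neg]
  have hcoeff : ∀ j, j ≤ m → R.coeff j = R.leadingCoeff * z.esymm (m - j) := by
    intro j hj
    conv_lhs => rw [hre]
    rw [coeff_C_mul, Multiset.prod_X_add_C_coeff z (by omega), hzcard]
  have hlc : R.leadingCoeff ≠ 0 := leadingCoeff_ne_zero.2 hR
  -- nonzero roots
  have hprodz : z.esymm m ≠ 0 := by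
    intro h
    apply hc0
    rw [hcoeff 0 (by omega), Nat.sub_zero, h, mul_zero]
  rw [← hzcard, esymm_card] at hprodz
  have hznz : ∀ x ∈ z, x ≠ 0 := by
    intro x hx h0
    exact hprodz (Multiset.prod_eq_zero (h0 ▸ hx))
  have he1 : z.esymm (m - 1) = 0 := by
    have := hcoeff 1 (by omega)
    rw [h1] at this
    rcases mul_eq_zero.1 this.symm with h | h
    · exact absurd h hlc
    · exact h
  set y : Multiset ℝ := z.map Inv.inv with hy
  have hcompl1 := esymm_compl z hznz 1 (by omega)
  rw [hzcard] at hcompl1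
  have hc1 : z.prod * y.esymm 1 = 0 := by rw [← hy] at hcompl1; rw [← hcompl1]; exact he1
  have hysum : y.sum = 0 := by
    rcases mul_eq_zero.1 hc1 with h | h
    · exact absurd h hprodz
    · rwa [esymm_one'] at h
  have he2 : y.esymm 2 ≤ 0 := by
    have h2 := esymm_two y
    rw [hysum] at h2
    have hnn : (0:ℝ) ≤ (y.map (fun x => x ^ 2)).sum := by
      apply Multiset.sum_nonneg
      intro a ha
      obtain ⟨b, _, rfl⟩ := Multiset.mem_map.1 ha
      exact sq_nonneg b
    nlinarith
  have hem2 : z.esymm (m - 2) = z.prod * y.esymm 2 := by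
    have := esymm_compl z hznz 2 (by omega)
    rwa [hzcard] at this
  have hc0e : R.coeff 0 = R.leadingCoeff * z.prod := by
    rw [hcoeff 0 (by omega), Nat.sub_zero, ← hzcard, esymm_card]
  have hc2e : R.coeff 2 = R.leadingCoeff * (z.prod * y.esymm 2) := by
    rw [hcoeff 2 (by omega), hem2]
  rw [hc0e, hc2e]
  have : R.leadingCoeff * z.prod * (R.leadingCoeff * (z.prod * y.esymm 2))
      = (R.leadingCoeff * z.prod)^2 * y.esymm 2 := by ring
  rw [this]
  exact mul_nonpos_of_nonneg_of_nonpos (sq_nonneg _) he2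

/-- Newton-type special case : a multiset of reals with `e_k > 0` and `e_{k+1} = 0`
has `e_{k+2} ≤ 0`. -/
lemma newton_special (z : Multiset ℝ) (k : ℕ) (h2 : 0 < z.esymm k)
    (h1 : z.esymm (k + 1) = 0) : z.esymm (k + 2) ≤ 0 := by
  rcases Nat.lt_or_ge (Multiset.card z) (k + 2) with hcard | hcard
  · rw [esymm_of_card_lt hcard]
  set N := Multiset.card z with hN
  set P : Polynomial ℝ := (z.map (fun a => Polynomial.X + Polynomial.C a)).prod with hP
  have hmonic : P.Monic := monic_multiset_prod_of_monic _ _ (fun a _ => monic_X_add_C a)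
  have hdeg : P.natDegree = N := by
    rw [hP, natDegree_multiset_prod_of_monic _ (by
      intro f hf
      obtain ⟨a, _, rfl⟩ := Multiset.mem_map.1 hf
      exact monic_X_add_C a), Multiset.map_map]
    have : (Multiset.map (natDegree ∘ fun a => X + C a) z)
        = Multiset.map (fun _ => 1) z := by
      apply Multiset.map_congr rfl
      intro a _
      simp [natDegree_X_add_C]
    rw [this, Multiset.map_const', Multiset.sum_replicate, smul_eq_mul, mul_one]
  have hsplits : P.Splits := by
    apply splits_multiset_prod'
    intro f hf
    obtain ⟨a, _, rfl⟩ := Multiset.mem_map.1 hf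
    exact Splits.of_natDegree_le_one_of_monic (by rw [natDegree_X_add_C]) (monic_X_add_C a)
  have hPc : ∀ j, j ≤ N → P.coeff j = z.esymm (N - j) :=
    fun j hj => Multiset.prod_X_add_C_coeff z hj
  set d := N - (k + 2) with hd
  set R := derivative^[d] P with hR
  have hRs : R.Splits := splits_iterate_derivative d P hsplits
  have hRc : ∀ j, R.coeff j = ((j + d).descFactorial d : ℝ) * P.coeff (j + d) := by
    intro j
    rw [hR, coeff_iterate_derivative, nsmul_eq_mul]
  have hR1 : R.coeff 1 = 0 := by
    rw [hRc 1, hPc (1 + d) (by omega)]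
    have : N - (1 + d) = k + 1 := by omega
    rw [this, h1, mul_zero]
  have hQ := coeff_quad_nonpos hRs hR1
  rw [hRc 0, hRc 2, hPc (0 + d) (by omega), hPc (2 + d) (by omega)] at hQ
  have e0 : N - (0 + d) = k + 2 := by omega
  have e2 : N - (2 + d) = k := by omega
  rw [e0, e2] at hQ
  have hd0 : (0:ℝ) < ((0 + d).descFactorial d : ℝ) := by
    have : (0 + d).descFactorial d ≠ 0 := by
      rw [Ne, Nat.descFactorial_eq_zero_iff_lt]
      omega
    positivity
  have hd2 : (0:ℝ) < ((2 + d).descFactorial d : ℝ) := by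
    have : (2 + d).descFactorial d ≠ 0 := by
      rw [Ne, Nat.descFactorial_eq_zero_iff_lt]
      omega
    positivity
  by_contra hpos
  push_neg at hpos
  nlinarith [hQ, mul_pos hd0 hpos, mul_pos hd2 h2]

end PolySection
namespace StmtAux
variable {n : ℕ}

theorem GC_erase : ∀ k : ℕ, ∀ (A : Finset (Fin n)) (μ : Fin n → ℝ), GC A k μ →
    ∀ i ∈ A, GC (A.erase i) (k - 1) μ := by
  intro k
  induction k using Nat.strong_induction_on with
  | _ k IH =>
  intro A μ hG i hi q hq1 hq2
  rcases Nat.lt_or_ge q (k - 1) with hlt | hge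
  · -- lower orders : use induction hypothesis at level k - 1
    have hk3 : k - 1 < k := by omega
    have h' := IH (k - 1) hk3 A μ (GC_anti (by omega) hG) i hi
    exact h' q hq1 (by omega)
  · -- top order q = k - 1
    have hk2 : 2 ≤ k := by omega
    have hq : q = k - 1 := by omega
    subst hq
    by_contra hneg
    push_neg at hneg
    set A' := A.erase i with hA'
    have hcard : k ≤ A.card := GC_card (by omega) hG
    have hcard' : k - 1 ≤ A'.card := by
      rw [hA', Finset.card_erase_of_mem hi]
      omega
    set T : ℝ := 1 + ∑ x ∈ A', |μ x| with hT
    have hT0 : (0:ℝ) ≤ T := by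
      have : (0:ℝ) ≤ ∑ x ∈ A', |μ x| := Finset.sum_nonneg fun x _ => abs_nonneg _
      linarith
    set f : ℝ → ℝ := fun c => S A' (k - 1) (fun x => μ x + c) with hf
    have hcont : Continuous f := by
      rw [hf]
      unfold S
      apply continuous_finset_sum
      intro t _
      apply continuous_finset_prod
      intro j _
      exact continuous_const.add continuous_id
    have hfT : 0 < f T := by
      rw [hf]
      unfold S
      apply Finset.sum_pos
      · intro t ht
        apply Finset.prod_pos
        intro j hj
        obtain ⟨htA, _⟩ := Finset.mem_powersetCard.1 ht
        have hjA : j ∈ A' := htA hj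
        have habs : |μ j| ≤ ∑ x ∈ A', |μ x| :=
          Finset.single_le_sum (fun x _ => abs_nonneg (μ x)) hjA
        have : -μ j ≤ |μ j| := neg_le_abs _
        simp only [hT]
        linarith
      · exact Finset.powersetCard_nonempty_of_le hcard'
    have hf0 : f 0 ≤ 0 := by
      have : (fun x => μ x + 0) = μ := by funext x; ring
      rw [hf]
      simpa [this] using hneg
    obtain ⟨c, hcmem, hfc⟩ := intermediate_value_Icc hT0 hcont.continuousOn ⟨hf0, hfT.le⟩
    have hc0 : 0 ≤ c := hcmem.1
    set μ' : Fin n → ℝ := fun x => μ x + c with hμ'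
    have hG' : GC A k μ' := GC_shift hc0 hG
    have hS'0 : S A' (k - 1) μ' = 0 := hfc
    -- apply the Newton-type inequality to μ' on A'
    set z : Multiset ℝ := A'.val.map μ' with hz
    have hSk2 : 0 < z.esymm (k - 2) := by
      rw [← S_eq_esymm]
      rcases Nat.eq_or_lt_of_le hk2 with h2 | h3
      · rw [← h2]
        norm_num [S_zero]
      · have h' := IH (k - 1) (by omega) A μ' (GC_anti (by omega) hG') i hi
        exact h' (k - 2) (by omega) (by omega)
    have hnewton := newton_special z (k - 2) hSk2 (by
      have : k - 2 + 1 = k - 1 := by omega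
      rw [this, ← S_eq_esymm]
      exact hS'0)
    have hkk : k - 2 + 2 = k := by omega
    rw [hkk, ← S_eq_esymm] at hnewton
    -- contradiction with S A k μ' > 0
    have hSA : S A k μ' = S A' k μ' + μ' i * S A' (k - 1) μ' := by
      have : k = (k - 1) + 1 := by omega
      rw [this]
      have h1 : k - 1 + 1 - 1 = k - 1 := by omega
      rw [← hA'] at *
      exact S_erase_add hi (k - 1) μ'
    have hpos := hG' k (by omega) le_rfl
    rw [hSA, hS'0, mul_zero, add_zero] at hpos
    linarith
end StmtAux
namespace StmtAux
variable {n : ℕ}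

lemma max_pos {A : Finset (Fin n)} {μ : Fin n → ℝ} {k : ℕ} (hk : 1 ≤ k)
    (hG : GC A k μ) {i : Fin n} (hi : i ∈ A) (hmax : ∀ j ∈ A, μ j ≤ μ i) :
    0 < μ i := by
  have h1 : 0 < S A 1 μ := hG 1 le_rfl hk
  rw [S_one] at h1
  by_contra hneg
  push_neg at hneg
  have : ∑ j ∈ A, μ j ≤ 0 := by
    apply Finset.sum_nonpos
    intro j hj
    exact (hmax j hj).trans hneg
  linarith

theorem CK : ∀ N : ℕ, ∀ (k : ℕ) (A : Finset (Fin n)) (μ : Fin n → ℝ),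
    k + A.card ≤ N → 1 ≤ k →
    ((GC A k μ → ∀ i ∈ A, (∀ j ∈ A, μ j ≤ μ i) →
        (k:ℝ) * S A k μ ≤ (A.card : ℝ) * (μ i * S (A.erase i) (k-1) μ)) ∧
     (∀ M : ℝ, GC A (k-1) μ → (∀ j ∈ A, μ j ≤ M) → 0 < M →
        (k:ℝ) * S A k μ ≤ ((A.card : ℝ) - ((k:ℝ)-1)) * (M * S A (k-1) μ))) := by
  intro N
  induction N using Nat.strong_induction_on with
  | _ N IH =>
  intro k A μ hN hk1
  constructor
  · -- statement C
    intro hG i hi hmax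
    have hμi : 0 < μ i := max_pos hk1 hG hi hmax
    set A' := A.erase i with hA'
    have hcardA : 1 ≤ A.card := Finset.card_pos.2 ⟨i, hi⟩
    have hcA' : A'.card = A.card - 1 := Finset.card_erase_of_mem hi
    have hGA' : GC A' (k-1) μ := GC_erase k A μ hG i hi
    have hKIH := (IH (k + A'.card) (by omega) k A' μ le_rfl hk1).2 (μ i) hGA'
      (fun j hj => hmax j (Finset.mem_of_mem_erase hj)) hμi
    -- split S A k μ
    have hsplit : S A k μ = S A' k μ + μ i * S A' (k-1) μ := by
      obtain ⟨k', rfl⟩ : ∃ k', k = k' + 1 := ⟨k - 1, by omega⟩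
      have h1 : k' + 1 - 1 = k' := by omega
      rw [h1]
      exact S_erase_add hi k' μ
    have hScard : ((A'.card : ℝ)) = (A.card : ℝ) - 1 := by
      rw [hcA']
      have : (1:ℕ) ≤ A.card := hcardA
      push_cast [Nat.cast_sub this]
      ring
    have hS'pos : 0 < S A' (k-1) μ ∨ k = 1 := by
      rcases Nat.eq_or_lt_of_le hk1 with h1 | h2
      · right; omega
      · left; exact hGA' (k-1) (by omega) le_rfl
    rcases hS'pos with hS' | hk1'
    · rw [hsplit]
      rw [hScard] at hKIH
      nlinarith [hKIH, hS', hμi]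
    · -- k = 1 : direct
      subst hk1'
      simp only [Nat.cast_one, one_mul, Nat.sub_self, S_zero, mul_one]
      rw [hsplit]
      simp only [Nat.sub_self, S_zero, mul_one]
      have hS1 : S A' 1 μ = ∑ j ∈ A', μ j := S_one A' μ
      have hbound : S A' 1 μ ≤ ((A'.card : ℝ)) * μ i := by
        rw [hS1]
        calc ∑ j ∈ A', μ j ≤ ∑ j ∈ A', μ i :=
              Finset.sum_le_sum (fun j hj => hmax j (Finset.mem_of_mem_erase hj))
        _ = ((A'.card : ℝ)) * μ i := by rw [Finset.sum_const, nsmul_eq_mul]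
      rw [hScard] at hbound
      nlinarith [hbound, hμi]
  · -- statement K
    intro M hGk1 hM hM0
    rcases Nat.eq_or_lt_of_le hk1 with hk1' | hk2
    · -- k = 1
      rw [← hk1']
      simp only [Nat.cast_one, one_mul, Nat.sub_self, S_zero, mul_one, sub_zero]
      rw [S_one]
      have hsum : ∑ j ∈ A, μ j ≤ (A.card : ℝ) * M := by
        calc ∑ j ∈ A, μ j ≤ ∑ j ∈ A, M := Finset.sum_le_sum hM
        _ = (A.card : ℝ) * M := by rw [Finset.sum_const, nsmul_eq_mul]
      nlinarith [hsum]
    · -- k ≥ 2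
      have hk2' : 2 ≤ k := hk2
      have hSk1 : 0 < S A (k-1) μ := hGk1 (k-1) (by omega) le_rfl
      have hcardk1 : k - 1 ≤ A.card := GC_card (by omega) hGk1
      rcases le_or_gt (S A k μ) 0 with hSk | hSk
      · have hc : (0:ℝ) ≤ (A.card : ℝ) - ((k:ℝ)-1) := by
          have : ((k:ℝ)) - 1 = ((k-1 : ℕ) : ℝ) := by
            push_cast [Nat.cast_sub (by omega : 1 ≤ k)]
            ring
          rw [this]
          exact sub_nonneg.2 (Nat.cast_le.2 hcardk1)
        have : (0:ℝ) ≤ ((A.card : ℝ) - ((k:ℝ)-1)) * (M * S A (k-1) μ) := by positivity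
        nlinarith [hSk]
      · -- S A k μ > 0 : full induction step
        have hGk : GC A k μ := by
          intro q h1 h2
          rcases Nat.eq_or_lt_of_le h2 with rfl | hlt
          · exact hSk
          · exact hGk1 q h1 (by omega)
        have hcardk : k ≤ A.card := GC_card (by omega) hGk
        obtain ⟨i, hi, hmax⟩ := Finset.exists_max_image A μ (Finset.card_pos.1 (by omega))
        have hμi : 0 < μ i := max_pos (by omega) hGk hi hmax
        have hμiM : μ i ≤ M := hM i hi
        set A' := A.erase i with hA'
        have hcA' : A'.card = A.card - 1 := Finset.card_erase_of_mem hi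
        have hGA' : GC A' (k-1) μ := GC_erase k A μ hGk i hi
        have hS'k1 : 0 < S A' (k-1) μ := hGA' (k-1) (by omega) le_rfl
        have hτ : 0 ≤ S A' (k-2) μ := by
          rcases Nat.eq_or_lt_of_le hk2' with h2 | h3
          · rw [← h2]
            norm_num [S_zero]
          · exact le_of_lt (hGA' (k-2) (by omega) (by omega))
        -- induction hypotheses
        have hKIH := (IH (k + A'.card) (by omega) k A' μ le_rfl (by omega)).2 M hGA'
          (fun j hj => hM j (Finset.mem_of_mem_erase hj)) hM0
        have hCIH := (IH ((k-1) + A.card) (by omega) (k-1) A μ le_rfl (by omega)).1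
          hGk1 i hi hmax
        -- splitting identities
        have hsplitk : S A k μ = S A' k μ + μ i * S A' (k-1) μ := by
          obtain ⟨k', rfl⟩ : ∃ k', k = k' + 1 := ⟨k - 1, by omega⟩
          have h1 : k' + 1 - 1 = k' := by omega
          rw [h1]
          exact S_erase_add hi k' μ
        have hsplitk1 : S A (k-1) μ = S A' (k-1) μ + μ i * S A' (k-2) μ := by
          obtain ⟨k', rfl⟩ : ∃ k', k = k' + 2 := ⟨k - 2, by omega⟩
          have h1 : k' + 2 - 1 = k' + 1 := by omega
          have h2 : k' + 2 - 2 = k' := by omega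
          rw [h1, h2]
          exact S_erase_add hi k' μ
        -- cast bookkeeping
        have hcast1 : ((k:ℝ)) - 1 = ((k-1 : ℕ) : ℝ) := by
          push_cast [Nat.cast_sub (by omega : 1 ≤ k)]
          ring
        have hcastA : ((A'.card : ℝ)) = (A.card : ℝ) - 1 := by
          rw [hcA']
          push_cast [Nat.cast_sub (by omega : 1 ≤ A.card)]
          ring
        rw [hcastA] at hKIH
        rw [← hcast1] at hCIH
        have hdc : (k:ℝ) ≤ (A.card : ℝ) := Nat.cast_le.2 hcardk
        have hstar : ((k:ℝ) - 1) * S A' (k-1) μ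
            ≤ ((A.card : ℝ) - ((k:ℝ) - 1)) * (μ i * S A' (k-2) μ) := by
          have hidx : k - 1 - 1 = k - 2 := by omega
          rw [hsplitk1, hidx, ← hA'] at hCIH
          nlinarith [hCIH]
        rw [hsplitk, hsplitk1]
        have hμiτ : 0 ≤ μ i * S A' (k-2) μ := by positivity
        nlinarith [hKIH, hS'k1, hμiM, hμi, hM0, hμiτ, hdc,
          mul_le_mul_of_nonneg_left hstar hμi.le,
          mul_nonneg (mul_nonneg (by linarith : (0:ℝ) ≤ (A.card:ℝ) - (k:ℝ) + 1) hμiτ)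
            (by linarith : (0:ℝ) ≤ M - μ i),
          mul_nonneg (by linarith : (0:ℝ) ≤ M - μ i) hS'k1.le]

end StmtAux
namespace StmtAux
variable {n : ℕ}

lemma esymm_eq_S (q : ℕ) (μ : Fin n → ℝ) : esymm n q μ = S Finset.univ q μ := rfl

lemma esymm_update (μ : Fin n → ℝ) (j : Fin n) (q : ℕ) :
    esymm n q (Function.update μ j 0) = S (Finset.univ.erase j) q μ := by
  rw [S, powersetCard_erase, Finset.sum_filter, esymm]
  apply Finset.sum_congr rfl
  intro t _
  by_cases hj : j ∈ t
  · rw [if_neg (by simpa using hj)]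
    exact Finset.prod_eq_zero hj (Function.update_self j 0 μ)
  · rw [if_pos hj]
    refine Finset.prod_congr rfl fun i hi => ?_
    exact Function.update_of_ne (fun h => hj (by rwa [← h])) 0 μ

end StmtAux

theorem stmt_5 (n p : ℕ) (hp : 2 ≤ p) (hpn : p ≤ n)
    (μ : Fin n → ℝ) (hμ : μ ∈ gardingCone n p) (hmono : Monotone μ) :
    (∀ j k : Fin n, j ≤ k →
      esymm n (p - 1) (Function.update μ k 0) ≤ esymm n (p - 1) (Function.update μ j 0)) ∧
    (∀ j : Fin n, 0 < esymm n (p - 1) (Function.update μ j 0)) ∧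
    ((p : ℝ) / (n : ℝ) * esymm n p μ
      ≤ μ ⟨n - 1, by omega⟩ *
          esymm n (p - 1) (Function.update μ (⟨n - 1, by omega⟩ : Fin n) 0)) := by
  open StmtAux in
  have hG : GC Finset.univ p μ := fun q h1 h2 => by
    rw [← esymm_eq_S]; exact hμ q h1 h2
  have hcardU : (Finset.univ : Finset (Fin n)).card = n := by
    rw [Finset.card_univ, Fintype.card_fin]
  refine ⟨?_, ?_, ?_⟩
  · -- monotonicity
    intro j k hjk
    rcases eq_or_lt_of_le hjk with rfl | hlt
    · exact le_refl _
    have hne : j ≠ k := ne_of_lt hlt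
    rw [esymm_update, esymm_update]
    have hdiff := S_erase_sub_erase (Finset.mem_univ j) (Finset.mem_univ k) hne
      (p - 2) μ
    have hidx : p - 2 + 1 = p - 1 := by omega
    rw [hidx] at hdiff
    have hkj : 0 ≤ μ k - μ j := sub_nonneg.2 (hmono hjk)
    have hS2 : 0 ≤ S ((Finset.univ.erase j).erase k) (p - 2) μ := by
      rcases Nat.eq_or_lt_of_le hp with h2 | h3
      · rw [← h2]
        norm_num [S_zero]
      · have h1 : GC (Finset.univ.erase j) (p - 1) μ :=
          GC_erase p Finset.univ μ hG j (Finset.mem_univ j)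
        have h2 : GC ((Finset.univ.erase j).erase k) (p - 1 - 1) μ :=
          GC_erase (p - 1) _ μ h1 k (Finset.mem_erase.2 ⟨hne.symm, Finset.mem_univ k⟩)
        have hidx2 : p - 1 - 1 = p - 2 := by omega
        rw [hidx2] at h2
        exact le_of_lt (h2 (p - 2) (by omega) le_rfl)
    nlinarith [hdiff, mul_nonneg hkj hS2]
  · -- positivity
    intro j
    rw [esymm_update]
    exact GC_erase p Finset.univ μ hG j (Finset.mem_univ j) (p - 1) (by omega) le_rfl
  · -- the trace inequality
    set i : Fin n := ⟨n - 1, by omega⟩ with hi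
    have hmax : ∀ j ∈ (Finset.univ : Finset (Fin n)), μ j ≤ μ i := by
      intro j _
      apply hmono
      show j.val ≤ n - 1
      have := j.isLt
      omega
    have hCK := (CK (p + n) p Finset.univ μ (by omega) (by omega)).1 hG i
      (Finset.mem_univ i) hmax
    rw [hcardU] at hCK
    rw [esymm_update, esymm_eq_S]
    have hn0 : (0:ℝ) < (n:ℝ) := by
      have : 0 < n := by omega
      exact_mod_cast this
    rw [div_mul_eq_mul_div, div_le_iff₀ hn0]
    nlinarith [hCK]
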